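/- Let r > 0 and let Ω be a subset of a real Hilbert space X of dimension at least 2. If Ω is connected, possesses the arc property for radius r, and contains two points at distance greater than 2r, then Ω = X. -/

import Mathlib

open Metric Set Filter
open scoped InnerProductSpace ENNReal Topology

variable {X : Type*} [NormedAddCommGroup X] [InnerProductSpace ℝ X] [CompleteSpace X]

/-- The "lens" of `x` and `y`: the intersection of all closed balls of radius `r`
containing both `x` and `y` (equal to the whole space if no such ball exists). -/
def lens (r : ℝ) (x y : X) : Set X :=
  ⋂ c ∈ {c : X | x ∈ closedBall c r ∧ y ∈ closedBall c r}, closedBall c r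

/-- A set `Ω` is `r`-convex if for all `x, y ∈ Ω` the lens of `x` and `y` is contained in `Ω`. -/
def IsRConvex (r : ℝ) (Ω : Set X) : Prop :=
  ∀ x ∈ Ω, ∀ y ∈ Ω, lens r x y ⊆ Ω

/-- `A` is a short arc of radius `r` joining `x` and `y`: either `x = y` and `A = {x}`,
or `x ≠ y` and `A` is the not-longer closed arc of a circle of radius `r`
(lying in a two-dimensional plane through its center `c`) through `x` and `y`.
The not-longer arc is characterized as `{z on the circle | ⟪v, z - c⟫ ≥ ⟪v, x - c⟫}`
for a nonzero vector `v` of the plane orthogonal to `x - y` with `⟪v, x - c⟫ ≥ 0`. -/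
def IsShortArc (r : ℝ) (x y : X) (A : Set X) : Prop :=
  (x = y ∧ A = {x}) ∨
  (x ≠ y ∧ ∃ (c v : X) (P : Submodule ℝ X), Module.finrank ℝ P = 2 ∧
    x - c ∈ P ∧ y - c ∈ P ∧ v ∈ P ∧ v ≠ 0 ∧
    ⟪v, x - y⟫_ℝ = 0 ∧ 0 ≤ ⟪v, x - c⟫_ℝ ∧
    ‖x - c‖ = r ∧ ‖y - c‖ = r ∧
    A = {z : X | z - c ∈ P ∧ ‖z - c‖ = r ∧ ⟪v, x - c⟫_ℝ ≤ ⟪v, z - c⟫_ℝ})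

/-- `Ω` possesses the arc property for radius `r` if every short arc of radius `r`
joining two points of `Ω` is contained in `Ω`. -/
def ArcProperty (r : ℝ) (Ω : Set X) : Prop :=
  ∀ x ∈ Ω, ∀ y ∈ Ω, ∀ A : Set X, IsShortArc r x y A → A ⊆ Ω

set_option maxHeartbeats 1000000

set_option linter.unusedSectionVars false

lemma norm_eq_of_sq_eq_sq {v : X} {c : ℝ} (h : ‖v‖ ^ 2 = c ^ 2) (hc : 0 ≤ c) : ‖v‖ = c := by
  have h2 : (‖v‖ - c) * (‖v‖ + c) = 0 := by ring_nf; linarith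
  rcases mul_eq_zero.mp h2 with h3 | h3
  · linarith
  · have := norm_nonneg v; linarith

lemma norm_combo {u w : X} (hu : ‖u‖ = 1) (hw : ‖w‖ = 1) (huw : ⟪u, w⟫_ℝ = 0) (a b : ℝ) :
    ‖a • u + b • w‖ ^ 2 = a ^ 2 + b ^ 2 := by
  rw [norm_add_sq_real, norm_smul, norm_smul, real_inner_smul_left, real_inner_smul_right, huw]
  simp [hu, hw]

lemma finrank_span_pair_eq_two {u w : X} (hu : ‖u‖ = 1) (hw : ‖w‖ = 1)
    (huw : ⟪u, w⟫_ℝ = 0) : Module.finrank ℝ (Submodule.span ℝ {u, w}) = 2 := by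
  have hli : LinearIndependent ℝ ![u, w] := by
    have : Orthonormal ℝ ![u, w] := by
      rw [orthonormal_iff_ite]
      intro i j
      fin_cases i <;> fin_cases j <;>
        simp [hu, hw, huw, real_inner_self_eq_norm_sq, real_inner_comm u w]
    exact this.linearIndependent
  have h := finrank_span_eq_card (R := ℝ) hli
  have hrange : Set.range ![u, w] = {u, w} := by
    ext z; simp [Matrix.range_cons, Matrix.range_empty]; tauto
  rw [hrange] at h
  simpa using h

lemma exists_unit_orthogonal (hdim : 2 ≤ Module.rank ℝ X) (v : X) :
    ∃ w : X, ‖w‖ = 1 ∧ ⟪v, w⟫_ℝ = 0 := by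
  have hK : (ℝ ∙ v)ᗮ ≠ ⊥ := by
    intro h
    have htop : (ℝ ∙ v) = ⊤ := Submodule.orthogonal_eq_bot_iff.mp h
    have : Module.rank ℝ X ≤ 1 := by
      rw [← rank_top ℝ X, ← htop]
      simpa using rank_span_le (R := ℝ) ({v} : Set X)
    have := hdim.trans this
    norm_num at this
  obtain ⟨w₀, hw₀mem, hw₀⟩ := Submodule.exists_mem_ne_zero_of_ne_bot hK
  refine ⟨‖w₀‖⁻¹ • w₀, ?_, ?_⟩
  · rw [norm_smul]; simp [norm_ne_zero_iff.mpr hw₀]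
  · have : ⟪v, w₀⟫_ℝ = 0 := by
      have h2 := (Submodule.mem_orthogonal' _ _).mp hw₀mem v (Submodule.mem_span_singleton_self v)
      rwa [real_inner_comm] at h2
    rw [real_inner_smul_right, this, mul_zero]

lemma sphere_mem_of_pair {r : ℝ} (hr : 0 < r) {Ω : Set X} (harc : ArcProperty r Ω)
    {x y : X} (hx : x ∈ Ω) (hy : y ∈ Ω) (hxy : ‖x - y‖ = 2 * r)
    {z : X} (hz : ‖z - (1/2 : ℝ) • (x + y)‖ = r) : z ∈ Ω := by
  set m : X := (1/2 : ℝ) • (x + y) with hm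
  have hxm : x - m = (1/2 : ℝ) • (x - y) := by rw [hm]; module
  have hym : y - m = -(x - m) := by rw [hm]; module
  have hxmr : ‖x - m‖ = r := by
    rw [hxm, norm_smul, hxy, Real.norm_eq_abs, abs_of_pos (by norm_num : (0:ℝ) < 1/2)]; ring
  by_cases hzx : z = x
  · rwa [hzx]
  by_cases hzy : z = y
  · rwa [hzy]
  have hne : x ≠ y := by
    intro h; rw [h, sub_self, norm_zero] at hxy; linarith
  set u : X := r⁻¹ • (x - m) with hu
  have hur : ‖u‖ = 1 := by
    rw [hu, norm_smul, Real.norm_eq_abs, hxmr, abs_of_pos (inv_pos.mpr hr)]; field_simp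
  have hxu : x - m = r • u := by rw [hu, smul_smul]; field_simp; rw [one_smul]
  set ι : ℝ := ⟪u, z - m⟫_ℝ with hι
  set v₀ : X := (z - m) - ι • u with hv₀def
  have huv₀ : ⟪u, v₀⟫_ℝ = 0 := by
    rw [hv₀def, inner_sub_right, real_inner_smul_right, real_inner_self_eq_norm_sq, hur]
    simp [hι]
  have hv₀ne : v₀ ≠ 0 := by
    intro h
    have hzm : z - m = ι • u := by
      rw [hv₀def] at h; exact sub_eq_zero.mp h
    have hnι : ‖z - m‖ = |ι| := by rw [hzm, norm_smul, hur]; simp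
    rw [hz] at hnι
    rcases (abs_eq (le_of_lt hr)).mp hnι.symm with h1 | h1
    · exact hzx (sub_left_inj.mp (by rw [hzm, h1, ← hxu]))
    · exact hzy (sub_left_inj.mp (by rw [hzm, h1, hym, hxu]; module))
  set η : ℝ := ‖v₀‖ with hηdef
  have hη0 : 0 < η := norm_pos_iff.mpr hv₀ne
  set w : X := η⁻¹ • v₀ with hwdef
  have hwr : ‖w‖ = 1 := by
    rw [hwdef, norm_smul, Real.norm_eq_abs, abs_of_pos (inv_pos.mpr hη0), ← hηdef]; field_simp
  have huw : ⟪u, w⟫_ℝ = 0 := by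
    rw [hwdef, real_inner_smul_right, huv₀, mul_zero]
  have hwu : ⟪w, u⟫_ℝ = 0 := by rw [real_inner_comm]; exact huw
  set P : Submodule ℝ X := Submodule.span ℝ {u, w} with hP
  have huP : u ∈ P := Submodule.subset_span (by simp)
  have hwP : w ∈ P := Submodule.subset_span (by simp)
  have hfr : Module.finrank ℝ P = 2 := finrank_span_pair_eq_two hur hwr huw
  have hwxm : ⟪w, x - m⟫_ℝ = 0 := by
    rw [hxu, real_inner_smul_right, hwu, mul_zero]
  have hv₀w : v₀ = η • w := by rw [hwdef, smul_smul]; field_simp; rw [one_smul]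
  have hzmem : z - m = ι • u + η • w := by rw [← hv₀w, hv₀def]; module
  refine harc x hx y hy
    {z' : X | z' - m ∈ P ∧ ‖z' - m‖ = r ∧ ⟪w, x - m⟫_ℝ ≤ ⟪w, z' - m⟫_ℝ} ?_ ?_
  · refine Or.inr ⟨hne, m, w, P, hfr, ?_, ?_, hwP, ?_, ?_, ?_, hxmr, ?_, rfl⟩
    · rw [hxu]; exact P.smul_mem _ huP
    · rw [hym, hxu]; exact P.neg_mem (P.smul_mem _ huP)
    · intro h; rw [h, norm_zero] at hwr; norm_num at hwr
    · have : x - y = (2 * r) • u := by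
        have h2 : x - y = (2 : ℝ) • (x - m) := by rw [hxm]; module
        rw [h2, hxu, smul_smul]
      rw [this, real_inner_smul_right, hwu, mul_zero]
    · rw [hwxm]
    · rw [hym, norm_neg, hxmr]
  · refine ⟨?_, hz, ?_⟩
    · rw [hzmem]; exact P.add_mem (P.smul_mem _ huP) (P.smul_mem _ hwP)
    · rw [hwxm, hzmem, inner_add_right, real_inner_smul_right, hwu,
        real_inner_smul_right, real_inner_self_eq_norm_sq, hwr]
      nlinarith [hη0]
lemma closedBall_subset_of_pair (hdim : 2 ≤ Module.rank ℝ X) {r : ℝ} (hr : 0 < r)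
    {Ω : Set X} (harc : ArcProperty r Ω)
    {x y : X} (hx : x ∈ Ω) (hy : y ∈ Ω) (hxy : ‖x - y‖ = 2 * r) :
    closedBall ((1/2 : ℝ) • (x + y)) r ⊆ Ω := by
  set m : X := (1/2 : ℝ) • (x + y) with hm
  intro p hp
  rw [mem_closedBall, dist_eq_norm] at hp
  rcases eq_or_lt_of_le hp with hps | hps
  · exact sphere_mem_of_pair hr harc hx hy hxy hps
  set s : ℝ := ‖p - m‖ with hsdef
  have hs0 : 0 ≤ s := norm_nonneg _
  obtain ⟨u, hur, hpu⟩ : ∃ u : X, ‖u‖ = 1 ∧ p - m = s • u := by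
    by_cases hpm : p = m
    · obtain ⟨w, hw, -⟩ := exists_unit_orthogonal hdim 0
      refine ⟨w, hw, ?_⟩
      have : s = 0 := by rw [hsdef, hpm, sub_self, norm_zero]
      rw [hpm, this, sub_self, zero_smul]
    · have hsne : s ≠ 0 := by
        rw [hsdef]; exact norm_ne_zero_iff.mpr (sub_ne_zero.mpr hpm)
      have hspos : 0 < s := lt_of_le_of_ne hs0 (Ne.symm hsne)
      refine ⟨s⁻¹ • (p - m), ?_, ?_⟩
      · rw [norm_smul, Real.norm_eq_abs, ← hsdef, abs_of_pos (inv_pos.mpr hspos)]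
        field_simp
      · rw [smul_smul]; field_simp; rw [one_smul]
  obtain ⟨w, hwr, huw⟩ := exists_unit_orthogonal hdim u
  have hwu : ⟪w, u⟫_ℝ = 0 := by rw [real_inner_comm]; exact huw
  set α : ℝ := (r + s) / 2 with hαdef
  have hα0 : 0 < α := by rw [hαdef]; linarith
  have hαr : α < r := by rw [hαdef]; linarith
  set β : ℝ := Real.sqrt (r ^ 2 - α ^ 2) with hβdef
  have hβ2 : β ^ 2 = r ^ 2 - α ^ 2 := Real.sq_sqrt (by nlinarith)
  have hβ0 : 0 < β := Real.sqrt_pos.mpr (by nlinarith)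
  set a : X := m + α • u + β • w with hadef
  set b : X := m + α • u - β • w with hbdef
  have ham : a - m = α • u + β • w := by rw [hadef]; module
  have hbm : b - m = α • u + (-β) • w := by rw [hbdef]; module
  have hamr : ‖a - m‖ = r := by
    rw [ham]; exact norm_eq_of_sq_eq_sq (by rw [norm_combo hur hwr huw]; nlinarith [hβ2]) hr.le
  have hbmr : ‖b - m‖ = r := by
    rw [hbm]; exact norm_eq_of_sq_eq_sq (by rw [norm_combo hur hwr huw]; nlinarith [hβ2]) hr.le
  have ha : a ∈ Ω := sphere_mem_of_pair hr harc hx hy hxy hamr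
  have hb : b ∈ Ω := sphere_mem_of_pair hr harc hx hy hxy hbmr
  set c : X := m + (2 * α) • u with hcdef
  set v : X := -u with hvdef
  set P : Submodule ℝ X := Submodule.span ℝ {u, w} with hP
  have huP : u ∈ P := Submodule.subset_span (by simp)
  have hwP : w ∈ P := Submodule.subset_span (by simp)
  have hfr : Module.finrank ℝ P = 2 := finrank_span_pair_eq_two hur hwr huw
  have hac : a - c = (-α) • u + β • w := by rw [hadef, hcdef]; module
  have hbc : b - c = (-α) • u + (-β) • w := by rw [hbdef, hcdef]; module
  have hab : a - b = (2 * β) • w := by rw [hadef, hbdef]; module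
  have hane : a ≠ b := by
    intro h
    have : (2 * β) • w = 0 := by rw [← hab, h, sub_self]
    rcases smul_eq_zero.mp this with h1 | h1
    · nlinarith
    · rw [h1, norm_zero] at hwr; norm_num at hwr
  have hvac : ⟪v, a - c⟫_ℝ = α := by
    rw [hvdef, hac, inner_neg_left, inner_add_right, real_inner_smul_right,
      real_inner_smul_right, real_inner_self_eq_norm_sq, hur, huw]
    ring
  have hacr : ‖a - c‖ = r := by
    rw [hac]; exact norm_eq_of_sq_eq_sq (by rw [norm_combo hur hwr huw]; nlinarith [hβ2]) hr.le
  have hbcr : ‖b - c‖ = r := by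
    rw [hbc]; exact norm_eq_of_sq_eq_sq (by rw [norm_combo hur hwr huw]; nlinarith [hβ2]) hr.le
  have hpc : p - c = (-r) • u := by
    have h1 : p - c = (p - m) - (c - m) := by module
    have h2 : c - m = (2 * α) • u := by rw [hcdef]; module
    rw [h1, h2, hpu, hαdef]
    module
  refine harc a ha b hb
    {z : X | z - c ∈ P ∧ ‖z - c‖ = r ∧ ⟪v, a - c⟫_ℝ ≤ ⟪v, z - c⟫_ℝ} ?_ ?_
  · refine Or.inr ⟨hane, c, v, P, hfr, ?_, ?_, ?_, ?_, ?_, ?_, hacr, hbcr, rfl⟩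
    · rw [hac]; exact P.add_mem (P.smul_mem _ huP) (P.smul_mem _ hwP)
    · rw [hbc]; exact P.add_mem (P.smul_mem _ huP) (P.smul_mem _ hwP)
    · rw [hvdef]; exact P.neg_mem huP
    · rw [hvdef]; intro h
      have : u = 0 := by rwa [neg_eq_zero] at h
      rw [this, norm_zero] at hur; norm_num at hur
    · rw [hvdef, hab, inner_neg_left, real_inner_smul_right, huw]; ring
    · rw [hvac]; exact hα0.le
  · refine ⟨?_, ?_, ?_⟩
    · rw [hpc]; exact P.smul_mem _ huP
    · rw [hpc, norm_smul, Real.norm_eq_abs, abs_of_neg (neg_neg_iff_pos.mpr hr), hur]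
      ring
    · rw [hvac, hpc, hvdef, inner_neg_left, real_inner_smul_right,
        real_inner_self_eq_norm_sq, hur]
      rw [hαdef]; nlinarith
/-- Propagation: if open balls of radius `r` around `m` and `m'` are in `Ω`
(with `0 < ‖m' - m‖ ≤ 2r`), then every point within `‖m' - m‖/8` of the midpoint
of `m, m'` is the center of a closed ball of radius `r` inside `Ω`. -/
lemma core_propagation (hdim : 2 ≤ Module.rank ℝ X) {r : ℝ} (hr : 0 < r)
    {Ω : Set X} (harc : ArcProperty r Ω)
    {m m' : X} (hm : ball m r ⊆ Ω) (hm' : ball m' r ⊆ Ω)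
    (hne : m ≠ m') (he2 : ‖m' - m‖ ≤ 2 * r)
    {t : X} (ht : ‖t - (1/2 : ℝ) • (m + m')‖ ≤ ‖m' - m‖ / 8) :
    closedBall t r ⊆ Ω := by
  set e : ℝ := ‖m' - m‖ with hedef
  have he0 : 0 < e := norm_pos_iff.mpr (sub_ne_zero.mpr (Ne.symm hne))
  clear_value e
  set u : X := e⁻¹ • (m' - m) with hudef
  clear_value u
  have hur : ‖u‖ = 1 := by
    rw [hudef, norm_smul, Real.norm_eq_abs, ← hedef, abs_of_pos (inv_pos.mpr he0)]
    field_simp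
  have hmu : m' - m = e • u := by rw [hudef, smul_smul]; field_simp; rw [one_smul]
  set ζ : X := t - (1/2 : ℝ) • (m + m') with hζdef
  have hζ : ‖ζ‖ ≤ e / 8 := ht
  clear_value ζ
  set c₀ : ℝ := ⟪u, ζ⟫_ℝ with hc₀def
  set τ : X := ζ - c₀ • u with hτdef
  clear_value c₀ τ
  have huτ : ⟪u, τ⟫_ℝ = 0 := by
    rw [hτdef, inner_sub_right, real_inner_smul_right, real_inner_self_eq_norm_sq, hur]
    simp [hc₀def]
  set η : ℝ := ‖τ‖ with hηdef
  have hη0 : 0 ≤ η := by rw [hηdef]; exact norm_nonneg τ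
  clear_value η
  obtain ⟨w, hwr, huw, hτw⟩ : ∃ w : X, ‖w‖ = 1 ∧ ⟪u, w⟫_ℝ = 0 ∧ τ = η • w := by
    by_cases hτ0 : τ = 0
    · obtain ⟨w, hw1, hw2⟩ := exists_unit_orthogonal hdim u
      refine ⟨w, hw1, hw2, ?_⟩
      have : η = 0 := by rw [hηdef, hτ0, norm_zero]
      rw [hτ0, this, zero_smul]
    · have hηpos : 0 < η := by rw [hηdef]; exact norm_pos_iff.mpr hτ0
      refine ⟨η⁻¹ • τ, ?_, ?_, ?_⟩
      · rw [norm_smul, Real.norm_eq_abs, ← hηdef, abs_of_pos (inv_pos.mpr hηpos)]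
        field_simp
      · rw [real_inner_smul_right, huτ, mul_zero]
      · rw [smul_smul]; field_simp; rw [one_smul]
  have hwu : ⟪w, u⟫_ℝ = 0 := by rw [real_inner_comm]; exact huw
  have hζdecomp : ζ = c₀ • u + η • w := by rw [← hτw, hτdef]; module
  have hpyth : ‖ζ‖ ^ 2 = c₀ ^ 2 + η ^ 2 := by
    rw [hζdecomp, norm_combo hur hwr huw]
  have hc₀ : |c₀| ≤ e / 8 := by
    have h1 : c₀ ^ 2 ≤ (e / 8) ^ 2 := by nlinarith [hpyth, hζ, norm_nonneg ζ, sq_nonneg η]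
    have := abs_le_abs (le_refl (e/8))
    rw [abs_le]; constructor <;> nlinarith [abs_nonneg c₀, sq_abs c₀, he0]
  have hη : η ≤ e / 8 := by nlinarith [hpyth, hζ, norm_nonneg ζ, sq_nonneg c₀]
  set s : ℝ := e / 2 + c₀ with hsdef
  clear_value s
  have hs1 : 3 * e / 8 ≤ s := by
    rw [hsdef]; have := abs_le.mp hc₀; linarith [this.1]
  have hs2 : s ≤ 5 * e / 8 := by
    rw [hsdef]; have := abs_le.mp hc₀; linarith [this.2]
  have hηr : η < r := by linarith
  set γ : ℝ := Real.sqrt (r ^ 2 - η ^ 2) with hγdef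
  have hγ2 : γ ^ 2 = r ^ 2 - η ^ 2 := Real.sq_sqrt (by nlinarith)
  have hγ0 : 0 < γ := Real.sqrt_pos.mpr (by nlinarith)
  have hγr : γ ≤ r := by nlinarith
  clear_value γ
  set n : X := (η / r) • w + (γ / r) • u with hndef
  clear_value n
  have hnr : ‖n‖ = 1 := by
    rw [hndef]
    refine norm_eq_of_sq_eq_sq ?_ (by norm_num)
    rw [norm_combo hwr hur hwu]
    field_simp
    nlinarith [hγ2]
  set x : X := t - r • n with hxdef
  set y : X := t + r • n with hydef
  clear_value x y
  have hrn : r • n = η • w + γ • u := by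
    rw [hndef, smul_add, smul_smul, smul_smul]
    congr 1 <;> congr 1 <;> field_simp
  have htm : t - m = s • u + η • w := by
    have h1 : t - m = (1/2 : ℝ) • (m' - m) + ζ := by rw [hζdef]; module
    rw [h1, hmu, hζdecomp, hsdef]
    module
  have hxm : x - m = (s - γ) • u := by
    rw [hxdef, show t - r • n - m = (t - m) - r • n by module, htm, hrn]
    module
  have hym : y - m' = (s + γ - e) • u + (2 * η) • w := by
    rw [hydef, show t + r • n - m' = (t - m) - (m' - m) + r • n by module, htm, hmu, hrn]
    module
  have hxball : x ∈ ball m r := by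
    rw [mem_ball, dist_eq_norm, hxm, norm_smul, Real.norm_eq_abs, hur, mul_one, abs_lt]
    constructor
    · nlinarith
    · nlinarith [hγ2, sq_nonneg (2*γ - r)]
  have hyball : y ∈ ball m' r := by
    rw [mem_ball, dist_eq_norm, hym]
    have hsq : ‖(s + γ - e) • u + (2 * η) • w‖ ^ 2 = (s + γ - e) ^ 2 + (2 * η) ^ 2 :=
      norm_combo hur hwr huw _ _
    have hB0 : 0 < e - s := by linarith
    have key : ((e - s) ^ 2 + 3 * η ^ 2) ^ 2 < (2 * (e - s) * γ) ^ 2 := by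
      have h4 : (2 * (e - s) * γ) ^ 2 = 4 * (e - s) ^ 2 * (r ^ 2 - η ^ 2) := by
        rw [mul_pow, mul_pow, hγ2]; ring
      rw [h4]
      have hBr : e - s ≤ 5 * r / 4 := by linarith
      have h9 : 9 * η ^ 2 ≤ (e - s) ^ 2 := by
        have h := mul_self_le_mul_self (by linarith : (0:ℝ) ≤ 3 * η)
          (by linarith : 3 * η ≤ e - s)
        ring_nf at h ⊢; linarith
      have hq1 : 9 * η ^ 4 ≤ (e - s) ^ 2 * η ^ 2 := by
        have h := mul_le_mul_of_nonneg_right h9 (sq_nonneg η)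
        ring_nf at h ⊢; linarith
      have hq2 : (e - s) ^ 2 * η ^ 2 * 9 ≤ (e - s) ^ 4 := by
        have h := mul_le_mul_of_nonneg_left h9 (sq_nonneg (e - s))
        ring_nf at h ⊢; linarith
      have hq3 : (e - s) ^ 4 * 16 ≤ 25 * r ^ 2 * (e - s) ^ 2 := by
        have hBB : (e - s) * (e - s) ≤ (5 * r / 4) * (5 * r / 4) :=
          mul_self_le_mul_self hB0.le hBr
        have h := mul_le_mul_of_nonneg_left hBB (sq_nonneg (e - s))
        ring_nf at h ⊢; linarith
      have hpos : 0 < (e - s) ^ 2 * r ^ 2 :=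
        mul_pos (by positivity) (by positivity)
      ring_nf
      ring_nf at hq1 hq2 hq3 hpos
      linarith [hq1, hq2, hq3, hpos]
    have key2 : (e - s) ^ 2 + 3 * η ^ 2 < 2 * (e - s) * γ :=
      lt_of_pow_lt_pow_left₀ 2 (by positivity) key
    have hlt : ‖(s + γ - e) • u + (2 * η) • w‖ ^ 2 < r ^ 2 := by
      rw [hsq]; nlinarith [hγ2, key2]
    exact lt_of_pow_lt_pow_left₀ 2 hr.le hlt
  have hxy : ‖x - y‖ = 2 * r := by
    have h1 : x - y = (-(2 * r)) • n := by rw [hxdef, hydef]; module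
    rw [h1, norm_smul, Real.norm_eq_abs, hnr, mul_one, abs_of_neg (by linarith)]
    ring
  have hmid : (1/2 : ℝ) • (x + y) = t := by rw [hxdef, hydef]; module
  have := closedBall_subset_of_pair hdim hr harc (hm hxball) (hm' hyball) hxy
  rwa [hmid] at this

/-- If `Ω` is connected, possesses the arc property for radius `r`, and contains
two points at distance greater than `2r`, then `Ω` is the whole space. -/
theorem eq_univ_of_arcProperty_of_far_points (hdim : 2 ≤ Module.rank ℝ X) {r : ℝ}
    (hr : 0 < r) {Ω : Set X} (hconn : IsPreconnected Ω) (harc : ArcProperty r Ω)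
    (hfar : ∃ x ∈ Ω, ∃ y ∈ Ω, 2 * r < ‖x - y‖) : Ω = univ := by
  obtain ⟨x₀, hx₀, y₀, hy₀, hfar2⟩ := hfar
  have hcont : ∀ q : X, ContinuousOn (fun z => ‖z - q‖) Ω := fun q =>
    ((continuous_id.sub continuous_const).norm).continuousOn
  set D : Set X := {c : X | ball c r ⊆ Ω} with hD
  have hmidD : ∀ a b : X, a ∈ Ω → b ∈ Ω → ‖a - b‖ = 2 * r → (1/2 : ℝ) • (a + b) ∈ D := by
    intro a b ha hb hab p hp
    exact closedBall_subset_of_pair hdim hr harc ha hb hab (ball_subset_closedBall hp)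
  have hmΩ : ∀ c ∈ D, c ∈ Ω := fun c hc => hc (mem_ball_self hr)
  -- Step 1 : a pair of points of Ω at distance exactly 2r
  have h2r : 2 * r ∈ Icc ‖x₀ - x₀‖ ‖y₀ - x₀‖ := by
    constructor
    · rw [sub_self, norm_zero]; linarith
    · rw [norm_sub_rev]; linarith
  obtain ⟨y₁, hy₁Ω, hy₁⟩ := hconn.intermediate_value hx₀ hy₀ (hcont x₀) h2r
  have hm₀ : (1/2 : ℝ) • (y₁ + x₀) ∈ D := hmidD y₁ x₀ hy₁Ω hx₀ hy₁
  set m₀ : X := (1/2 : ℝ) • (y₁ + x₀) with hm₀def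
  clear_value m₀
  -- Step 2 (ratchet) : another center in D at positive distance ≤ 2r from m₀
  have hq : ∃ q ∈ Ω, r < ‖q - m₀‖ := by
    by_cases h : r < ‖x₀ - m₀‖
    · exact ⟨x₀, hx₀, h⟩
    · push_neg at h
      refine ⟨y₀, hy₀, ?_⟩
      have htri : ‖x₀ - y₀‖ ≤ ‖x₀ - m₀‖ + ‖y₀ - m₀‖ := by
        have := norm_sub_le (x₀ - m₀) (y₀ - m₀)
        simpa [sub_sub_sub_cancel_right] using this
      linarith
  obtain ⟨q, hqΩ, hqfar⟩ := hq
  set ρ : ℝ := min ‖q - m₀‖ (2 * r) with hρdef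
  have hρ1 : r < ρ := lt_min hqfar (by linarith)
  have hρ2 : ρ ≤ 2 * r := min_le_right _ _
  have hρq : ρ ≤ ‖q - m₀‖ := min_le_left _ _
  clear_value ρ
  have hρmem : ρ ∈ Icc ‖m₀ - m₀‖ ‖q - m₀‖ := by
    constructor
    · rw [sub_self, norm_zero]; linarith
    · exact hρq
  obtain ⟨y₂, hy₂Ω, hy₂⟩ := hconn.intermediate_value (hmΩ m₀ hm₀) hqΩ (hcont m₀) hρmem
  simp only at hy₂
  have hρ0 : 0 < ρ := by linarith
  set u₁ : X := ρ⁻¹ • (y₂ - m₀) with hu₁def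
  have hu₁r : ‖u₁‖ = 1 := by
    rw [hu₁def, norm_smul, Real.norm_eq_abs, hy₂, abs_of_pos (inv_pos.mpr hρ0)]
    field_simp
  have hy₂eq : y₂ = m₀ + ρ • u₁ := by
    rw [hu₁def, smul_smul, mul_inv_cancel₀ (ne_of_gt hρ0), one_smul]
    module
  clear_value u₁
  set x₂ : X := m₀ - (2 * r - ρ) • u₁ with hx₂def
  clear_value x₂
  have hx₂ball : x₂ ∈ ball m₀ r := by
    rw [mem_ball, dist_eq_norm, hx₂def, show m₀ - (2*r - ρ) • u₁ - m₀ = (-(2*r - ρ)) • u₁ by module,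
      norm_smul, Real.norm_eq_abs, hu₁r, mul_one, abs_of_nonpos (by linarith), neg_neg]
    linarith
  have hx₂Ω : x₂ ∈ Ω := hm₀ hx₂ball
  have hpair : ‖y₂ - x₂‖ = 2 * r := by
    rw [hy₂eq, hx₂def, show m₀ + ρ • u₁ - (m₀ - (2*r - ρ) • u₁) = (2*r) • u₁ by module,
      norm_smul, Real.norm_eq_abs, hu₁r, mul_one, abs_of_pos (by linarith)]
  have hm₁ : (1/2 : ℝ) • (y₂ + x₂) ∈ D := hmidD y₂ x₂ hy₂Ω hx₂Ω hpair
  set m₁ : X := (1/2 : ℝ) • (y₂ + x₂) with hm₁def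
  have hm₁m₀ : m₁ - m₀ = (ρ - r) • u₁ := by
    rw [hm₁def, hy₂eq, hx₂def]; module
  clear_value m₁
  have hm₁dist : ‖m₁ - m₀‖ = ρ - r := by
    rw [hm₁m₀, norm_smul, Real.norm_eq_abs, hu₁r, mul_one, abs_of_pos (by linarith)]
  have hm₁ne : m₀ ≠ m₁ := by
    intro h
    rw [← h, sub_self, norm_zero] at hm₁dist; linarith
  -- δ₀ and the initial ball of centers
  set δ₀ : ℝ := (ρ - r) / 8 with hδ₀def
  have hδ₀pos : 0 < δ₀ := by rw [hδ₀def]; linarith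
  have hδ₀r : δ₀ ≤ r := by rw [hδ₀def]; linarith
  clear_value δ₀
  set z₀ : X := (1/2 : ℝ) • (m₀ + m₁) with hz₀def
  have hcoreD : ∀ ⦃mA mB : X⦄, mA ∈ D → mB ∈ D → mA ≠ mB → ‖mB - mA‖ ≤ 2 * r →
      ∀ t : X, ‖t - (1/2 : ℝ) • (mA + mB)‖ ≤ ‖mB - mA‖ / 8 → t ∈ D := by
    intro mA mB hA hB hAB h2 t ht p hp
    exact core_propagation hdim hr harc hA hB hAB h2 ht (ball_subset_closedBall hp)
  have hz₀A : ∀ t ∈ closedBall z₀ δ₀, t ∈ D := by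
    intro t ht
    refine hcoreD hm₀ hm₁ hm₁ne (by rw [hm₁dist]; linarith) t ?_
    rw [mem_closedBall, dist_eq_norm] at ht
    rw [← hz₀def, hm₁dist]
    calc ‖t - z₀‖ ≤ δ₀ := ht
    _ ≤ (ρ - r) / 8 := by rw [hδ₀def]
  clear_value z₀
  -- The set A of good centers is clopen and nonempty
  set A : Set X := {z : X | ∀ p ∈ closedBall z δ₀, p ∈ D} with hA
  have hz₀memA : z₀ ∈ A := hz₀A
  have hDclosed : IsClosed D := by
    rw [← isOpen_compl_iff, Metric.isOpen_iff]
    intro c hc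
    rw [mem_compl_iff, hD, mem_setOf_eq, not_subset] at hc
    obtain ⟨p, hpball, hpΩ⟩ := hc
    rw [mem_ball] at hpball
    refine ⟨r - dist p c, by linarith, ?_⟩
    intro c' hc'
    rw [mem_ball] at hc'
    rw [mem_compl_iff, hD, mem_setOf_eq, not_subset]
    refine ⟨p, ?_, hpΩ⟩
    rw [mem_ball]
    calc dist p c' ≤ dist p c + dist c c' := dist_triangle _ _ _
    _ = dist p c + dist c' c := by rw [dist_comm c c']
    _ < dist p c + (r - dist p c) := by linarith
    _ = r := by ring
  have hAclosed : IsClosed A := by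
    have hAeq : A = ⋂ h ∈ closedBall (0 : X) δ₀, (fun z => z + h) ⁻¹' D := by
      ext z
      simp only [hA, mem_setOf_eq, mem_iInter, mem_preimage]
      constructor
      · intro hz h hh
        refine hz (z + h) ?_
        rw [mem_closedBall, dist_eq_norm, add_sub_cancel_left]
        rw [mem_closedBall, dist_eq_norm, sub_zero] at hh
        exact hh
      · intro hz p hp
        have h1 : p - z ∈ closedBall (0 : X) δ₀ := by
          rw [mem_closedBall, dist_eq_norm, sub_zero]
          rw [mem_closedBall, dist_eq_norm] at hp
          exact hp
        have := hz (p - z) h1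
        simpa using this
    rw [hAeq]
    exact isClosed_biInter fun h _ => hDclosed.preimage (continuous_id.add continuous_const)
  have hclaim : ∀ z ∈ A, ∀ p : X, dist p z ≤ δ₀ * 103 / 100 → p ∈ D := by
    intro z hzA p hp
    by_cases hple : dist p z ≤ δ₀
    · exact hzA p (mem_closedBall.mpr hple)
    push_neg at hple
    set ρ₁ : ℝ := dist p z with hρ₁def
    have hρ₁pos : 0 < ρ₁ := by rw [hρ₁def]; linarith
    have hρ₁n : ρ₁ = ‖p - z‖ := by rw [hρ₁def, dist_eq_norm]
    clear_value ρ₁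
    set n : X := ρ₁⁻¹ • (p - z) with hndef
    have hnr : ‖n‖ = 1 := by
      rw [hndef, norm_smul, Real.norm_eq_abs, ← hρ₁n, abs_of_pos (inv_pos.mpr hρ₁pos)]
      field_simp
    have hpzn : p - z = ρ₁ • n := by
      rw [hndef, smul_smul, mul_inv_cancel₀ (ne_of_gt hρ₁pos), one_smul]
    clear_value n
    obtain ⟨v, hvr, hnv⟩ := exists_unit_orthogonal hdim n
    set p₁ : X := z + ((24/25) * δ₀) • n - ((7/25) * δ₀) • v with hp₁def
    set p₂ : X := z + ((24/25) * δ₀) • n + ((7/25) * δ₀) • v with hp₂def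
    clear_value p₁ p₂
    have hp₁z : p₁ - z = ((24/25) * δ₀) • n + (-((7/25) * δ₀)) • v := by rw [hp₁def]; module
    have hp₂z : p₂ - z = ((24/25) * δ₀) • n + ((7/25) * δ₀) • v := by rw [hp₂def]; module
    have hp₁ball : p₁ ∈ closedBall z δ₀ := by
      rw [mem_closedBall, dist_eq_norm, hp₁z]
      have := norm_combo hnr hvr hnv ((24/25) * δ₀) (-((7/25) * δ₀))
      have hn : ‖((24/25) * δ₀) • n + (-((7/25) * δ₀)) • v‖ = δ₀ :=
        norm_eq_of_sq_eq_sq (by rw [this]; ring) hδ₀pos.le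
      rw [hn]
    have hp₂ball : p₂ ∈ closedBall z δ₀ := by
      rw [mem_closedBall, dist_eq_norm, hp₂z]
      have := norm_combo hnr hvr hnv ((24/25) * δ₀) ((7/25) * δ₀)
      have hn : ‖((24/25) * δ₀) • n + ((7/25) * δ₀) • v‖ = δ₀ :=
        norm_eq_of_sq_eq_sq (by rw [this]; ring) hδ₀pos.le
      rw [hn]
    have hp₁D : p₁ ∈ D := hzA p₁ hp₁ball
    have hp₂D : p₂ ∈ D := hzA p₂ hp₂ball
    have hp21 : p₂ - p₁ = ((14/25) * δ₀) • v := by rw [hp₁def, hp₂def]; module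
    have hp21n : ‖p₂ - p₁‖ = (14/25) * δ₀ := by
      rw [hp21, norm_smul, Real.norm_eq_abs, hvr, mul_one, abs_of_pos (by linarith)]
    have hp12ne : p₁ ≠ p₂ := by
      intro h
      rw [h, sub_self, norm_zero] at hp21n; linarith
    have hmid : (1/2 : ℝ) • (p₁ + p₂) = z + ((24/25) * δ₀) • n := by
      rw [hp₁def, hp₂def]; module
    refine hcoreD hp₁D hp₂D hp12ne (by rw [hp21n]; linarith) p ?_
    rw [hmid, hp21n]
    have hdiff : p - (z + ((24/25) * δ₀) • n) = (ρ₁ - (24/25) * δ₀) • n := by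
      rw [show p - (z + ((24/25) * δ₀) • n) = (p - z) - ((24/25) * δ₀) • n by module, hpzn]
      module
    rw [hdiff, norm_smul, Real.norm_eq_abs, hnr, mul_one,
      abs_of_pos (by linarith : (0:ℝ) < ρ₁ - (24/25) * δ₀)]
    linarith
  have hAopen : IsOpen A := by
    rw [Metric.isOpen_iff]
    intro z hzA
    refine ⟨3 * δ₀ / 100, by linarith, ?_⟩
    intro z' hz'
    rw [mem_ball] at hz'
    intro p hp
    rw [mem_closedBall] at hp
    refine hclaim z hzA p ?_
    calc dist p z ≤ dist p z' + dist z' z := dist_triangle _ _ _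
    _ ≤ δ₀ + 3 * δ₀ / 100 := by linarith
    _ ≤ δ₀ * 103 / 100 := by linarith
  have hAuniv : A = univ := IsClopen.eq_univ ⟨hAclosed, hAopen⟩ ⟨z₀, hz₀memA⟩
  rw [eq_univ_iff_forall]
  intro w
  have hwA : w ∈ A := by rw [hAuniv]; trivial
  have hwD : w ∈ D := hwA w (mem_closedBall_self hδ₀pos.le)
  exact hwD (mem_ball_self hr)
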